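/- For every n ≥ 1 and every rule X : ZMod n → ZMod 2, the length of every cycle in the state transition diagram of the automaton with rule X divides c*(n) = 2^{ι(2,n)} · (2^{𝔠(n)} − 1); equivalently, every state s that is cyclic for X satisfies C(X)^{c*(n)} *ᵥ s = s. -/

import Mathlib

open Matrix

/-- The discrete Baker transformation: `(𝔟 X) i = ∑_{j : 2*j = i} X j`. -/
def baker {n : ℕ} [NeZero n] (X : ZMod n → ZMod 2) : ZMod n → ZMod 2 :=
  fun i => ∑ j ∈ Finset.univ.filter (fun j : ZMod n => (2 : ZMod n) * j = i), X j


/-- The circulant matrix of a vector `X : ZMod n → ZMod 2`, with entries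
`C(X) i j = X (j - i)`. -/
def circulantVec {n : ℕ} (X : ZMod n → ZMod 2) : Matrix (ZMod n) (ZMod n) (ZMod 2) :=
  Matrix.of fun i j => X (j - i)


/-- A state `s` is cyclic for the rule `X` if some positive power of the
automaton operator `C(X)` returns `s` to itself. -/
def IsCyclicState {n : ℕ} [NeZero n] (X s : ZMod n → ZMod 2) : Prop :=
  ∃ m : ℕ, 0 < m ∧ (circulantVec X) ^ m *ᵥ s = s


/-- The critical number `𝔠(n)`. -/
noncomputable def cFun (n : ℕ) : ℕ :=
  if 1 < n / 2 ^ (padicValNat 2 n) then orderOf (2 : ZMod (n / 2 ^ (padicValNat 2 n))) else 1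

/-! ### Auxiliary material -/

noncomputable abbrev AMA (n : ℕ) := AddMonoidAlgebra (ZMod 2) (ZMod n)

instance (n : ℕ) : CharP (AMA n) 2 := charP_of_injective_algebraMap' (ZMod 2) (A := AMA n) 2

/-- The translation matrix. -/
def transMat {n : ℕ} (a : ZMod n) : Matrix (ZMod n) (ZMod n) (ZMod 2) :=
  Matrix.of fun i j => if j - i = a then 1 else 0

def transHom (n : ℕ) [NeZero n] : Multiplicative (ZMod n) →* Matrix (ZMod n) (ZMod n) (ZMod 2) where
  toFun a := transMat (Multiplicative.toAdd a)
  map_one' := by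
    ext i j
    simp [transMat, Matrix.one_apply, sub_eq_zero, eq_comm]
  map_mul' a b := by
    ext i j
    simp only [Matrix.mul_apply, transMat, Matrix.of_apply]
    rw [Finset.sum_eq_single (i + Multiplicative.toAdd a)]
    · rw [add_sub_cancel_left, if_pos rfl, one_mul, toAdd_mul]
      exact if_congr (by rw [sub_eq_iff_eq_add', sub_eq_iff_eq_add', add_assoc]) rfl rfl
    · intro k _ hne
      rw [if_neg fun h => hne (by rw [← h]; ring), zero_mul]
    · intro h; exact absurd (Finset.mem_univ _) h

noncomputable def phi (n : ℕ) [NeZero n] : AMA n →ₐ[ZMod 2] Matrix (ZMod n) (ZMod n) (ZMod 2) :=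
  AddMonoidAlgebra.lift (ZMod 2) _ (ZMod n) (transHom n)

noncomputable def poly {n : ℕ} [NeZero n] (X : ZMod n → ZMod 2) : AMA n :=
  ∑ a : ZMod n, AddMonoidAlgebra.single a (X a)

theorem phi_poly {n : ℕ} [NeZero n] (X : ZMod n → ZMod 2) : phi n (poly X) = circulantVec X := by
  ext i j
  rw [poly, map_sum]
  simp only [phi, AddMonoidAlgebra.lift_single, transHom, MonoidHom.coe_mk, OneHom.coe_mk,
    toAdd_ofAdd]
  rw [Matrix.sum_apply]
  simp only [Matrix.smul_apply, transMat, Matrix.of_apply, smul_ite, smul_zero, smul_eq_mul,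
    mul_one, mul_ite, mul_zero]
  rw [Finset.sum_ite_eq Finset.univ (j - i) (fun a => X a), if_pos (Finset.mem_univ _)]
  rfl

theorem zmod2_pow_self (r : ZMod 2) {m : ℕ} (hm : 0 < m) : r ^ m = r := by
  fin_cases r
  · exact zero_pow hm.ne'
  · exact one_pow m

theorem poly_pow_two_pow {n : ℕ} [NeZero n] (X : ZMod n → ZMod 2) (k : ℕ) :
    (poly X) ^ (2 ^ k) = ∑ a : ZMod n, AddMonoidAlgebra.single ((2 ^ k) • a) (X a) := by
  rw [poly, sum_pow_char_pow]
  refine Finset.sum_congr rfl fun a _ => ?_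
  rw [AddMonoidAlgebra.single_pow, zmod2_pow_self _ (Nat.pow_pos (by norm_num))]

theorem n_dvd_key (n : ℕ) [NeZero n] :
    n ∣ 2 ^ (padicValNat 2 n) * (2 ^ (cFun n) - 1) := by
  have hn : n ≠ 0 := NeZero.ne n
  set v := padicValNat 2 n with hv
  set n' := n / 2 ^ v with hn'
  have hfac : n.factorization 2 = v := Nat.factorization_def n Nat.prime_two
  have hsplit : 2 ^ v * n' = n := by
    have := Nat.ordProj_mul_ordCompl_eq_self n 2
    rwa [hfac] at this
  have hdvd : n' ∣ 2 ^ (cFun n) - 1 := by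
    by_cases h : 1 < n'
    · have hc : cFun n = orderOf (2 : ZMod n') := by rw [cFun, if_pos h]
      have hne : NeZero n' := ⟨by omega⟩
      have h1 : ((2 ^ cFun n - 1 : ℕ) : ZMod n') = 0 := by
        have h2 : ((2 : ZMod n')) ^ cFun n = 1 := by rw [hc]; exact pow_orderOf_eq_one _
        have h3 : (1 : ℕ) ≤ 2 ^ cFun n := Nat.one_le_two_pow
        push_cast [h3]
        rw [h2]; ring
      exact (ZMod.natCast_eq_zero_iff _ _).mp h1
    · have : n' = 1 := by
        have : 0 < n' := Nat.div_pos (Nat.le_of_dvd (by omega) (Nat.ordProj_dvd n 2)) (by positivity)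
        omega
      simp [this]
  calc n = 2 ^ v * n' := hsplit.symm
    _ ∣ 2 ^ v * (2 ^ cFun n - 1) := mul_dvd_mul_left _ hdvd

theorem smul_key (n : ℕ) [NeZero n] (a : ZMod n) :
    (2 ^ (padicValNat 2 n + cFun n)) • a = (2 ^ (padicValNat 2 n)) • a := by
  set v := padicValNat 2 n
  set c := cFun n
  have h1 : (1 : ℕ) ≤ 2 ^ c := Nat.one_le_two_pow
  have hle : 2 ^ v ≤ 2 ^ (v + c) := Nat.pow_le_pow_right (by norm_num) (by omega)
  have hdvd : n ∣ 2 ^ (v + c) - 2 ^ v := by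
    have : 2 ^ (v + c) - 2 ^ v = 2 ^ v * (2 ^ c - 1) := by
      rw [pow_add, Nat.mul_sub, mul_one]
    rw [this]; exact n_dvd_key n
  have hcast : ((2 ^ (v + c) : ℕ) : ZMod n) = ((2 ^ v : ℕ) : ZMod n) :=
    (ZMod.natCast_eq_natCast_iff _ _ _).mpr ((Nat.modEq_iff_dvd' hle).mpr hdvd).symm
  rw [nsmul_eq_mul, nsmul_eq_mul, hcast]

theorem circ_pow_eq {n : ℕ} [NeZero n] (X : ZMod n → ZMod 2) :
    (circulantVec X) ^ (2 ^ (padicValNat 2 n + cFun n)) =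
      (circulantVec X) ^ (2 ^ (padicValNat 2 n)) := by
  have hp : (poly X) ^ (2 ^ (padicValNat 2 n + cFun n)) = (poly X) ^ (2 ^ (padicValNat 2 n)) := by
    rw [poly_pow_two_pow, poly_pow_two_pow]
    exact Finset.sum_congr rfl fun a _ => by rw [smul_key]
  rw [← phi_poly, ← map_pow, ← map_pow, hp]

theorem cycle_length_dvd_cStar {n : ℕ} [NeZero n] (X : ZMod n → ZMod 2) :
    ∀ s : ZMod n → ZMod 2, IsCyclicState X s →
      (circulantVec X) ^ (2 ^ (padicValNat 2 n) * (2 ^ (cFun n) - 1)) *ᵥ s = s := by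
  intro s hs
  obtain ⟨m, hm, hms⟩ := hs
  set C := circulantVec X with hC
  set v := padicValNat 2 n
  set c := cFun n
  set E := 2 ^ v * (2 ^ c - 1) with hE
  have h1 : (1 : ℕ) ≤ 2 ^ c := Nat.one_le_two_pow
  have hEeq : 2 ^ v + E = 2 ^ (v + c) := by
    rw [hE, Nat.mul_sub, mul_one, pow_add]
    have : 2 ^ v ≤ 2 ^ v * 2 ^ c := Nat.le_mul_of_pos_right _ (by positivity)
    omega
  -- s is fixed by C ^ (m * k) for every k
  have hiter : ∀ k : ℕ, C ^ (m * k) *ᵥ s = s := by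
    intro k
    induction k with
    | zero => simp
    | succ k ih =>
      rw [Nat.mul_succ, pow_add, ← Matrix.mulVec_mulVec, hms, ih]
  have ht : C ^ (m * 2 ^ v) *ᵥ s = s := hiter (2 ^ v)
  have htle : 2 ^ v ≤ m * 2 ^ v := Nat.le_mul_of_pos_left _ hm
  -- key: C ^ (E + m * 2^v) = C ^ (m * 2^v)
  have hkey : C ^ (E + m * 2 ^ v) = C ^ (m * 2 ^ v) := by
    have hsum : E + m * 2 ^ v = (m * 2 ^ v - 2 ^ v) + 2 ^ (v + c) := by omega
    have hsum2 : m * 2 ^ v = (m * 2 ^ v - 2 ^ v) + 2 ^ v := by omega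
    rw [hsum, pow_add, circ_pow_eq X, ← pow_add, ← hsum2]
  calc C ^ E *ᵥ s = C ^ E *ᵥ (C ^ (m * 2 ^ v) *ᵥ s) := by rw [ht]
    _ = C ^ (E + m * 2 ^ v) *ᵥ s := by rw [Matrix.mulVec_mulVec, ← pow_add]
    _ = s := by rw [hkey, ht]
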